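/- The Arf invariant is well-defined: if a quadratic form q in two variables over a field K of characteristic 2 is described by q(v) = v'Mv for matrices M and M̃ (so M - M̃ = t·i for some t ∈ K, where i is the standard alternating 2×2 matrix), then det(M)/(tr(iM))² and det(M̃)/(tr(iM̃))² differ by an element of ℘ := {x + x² : x ∈ K}. -/

import Mathlib

open Matrix
/-- Well-definedness of the Arf invariant in characteristic 2. -/
theorem arf_well_defined {K : Type*} [Field K] [CharP K 2]
    (M M' : Matrix (Fin 2) (Fin 2) K)
    (hsame : ∀ v : Fin 2 → K, v ⬝ᵥ M.mulVec v = v ⬝ᵥ M'.mulVec v)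
    (hM : (!![(0 : K), 1; -1, 0] * M).trace ≠ 0)
    (hM' : (!![(0 : K), 1; -1, 0] * M').trace ≠ 0) :
    ∃ t : K,
      M.det / ((!![(0 : K), 1; -1, 0] * M).trace) ^ 2
        - M'.det / ((!![(0 : K), 1; -1, 0] * M').trace) ^ 2 = t + t ^ 2 := by
  have h2 : (2 : K) = 0 := by exact_mod_cast CharP.cast_eq_zero K 2
  have h00 := hsame ![1, 0]
  have h11 := hsame ![0, 1]
  have h01 := hsame ![1, 1]
  simp [dotProduct, Matrix.mulVec, Fin.sum_univ_two] at h00 h11 h01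
  have htr : (!![(0 : K), 1; -1, 0] * M).trace = M 1 0 - M 0 1 := by
    simp [Matrix.trace, Matrix.mul_apply, Fin.sum_univ_two, Matrix.vecMul,
      dotProduct, Matrix.vecHead, Matrix.vecTail]
    ring
  have htr' : (!![(0 : K), 1; -1, 0] * M').trace = M' 1 0 - M' 0 1 := by
    simp [Matrix.trace, Matrix.mul_apply, Fin.sum_univ_two, Matrix.vecMul,
      dotProduct, Matrix.vecHead, Matrix.vecTail]
    ring
  rw [htr] at hM ⊢
  rw [htr'] at hM' ⊢
  have hc' : M' 1 0 = M 0 1 + M 1 0 - M' 0 1 := by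
    linear_combination h01 - h00 - h11 + (M' 1 0 + M' 0 1 - M 0 1 - M 1 0) * h2
  rw [hc'] at hM' ⊢
  rw [Matrix.det_fin_two, Matrix.det_fin_two, h00, h11, hc']
  have hs : M 0 1 + M 1 0 - M' 0 1 - M' 0 1 = M 1 0 - M 0 1 := by
    linear_combination (M 0 1 - M' 0 1) * h2
  rw [hs] at hM' ⊢
  refine ⟨(M 0 1 - M' 0 1) / (M 1 0 - M 0 1), ?_⟩
  field_simp
  linear_combination ((M 0 1 * M' 0 1 + M' 0 1 * M 1 0 - M' 0 1 ^ 2 - M 0 1 * M 1 0)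
    * (M 1 0 - M 0 1) ^ 2 + ((M' 0 1)*(M 0 1)*(M 1 0)^2 - 2*(M' 0 1)*(M 0 1)*(M 1 0)^3 + (M' 0 1)*(M 0 1)^2*(M 1 0) - (M' 0 1)*(M 0 1)^3 + 2*(M' 0 1)*(M 0 1)^3*(M 1 0) - (M' 0 1)*(M 0 1)^4 - (M' 0 1)*(M 1 0)^3 + (M' 0 1)*(M 1 0)^4 - 2*(M' 0 1)^2*(M 0 1)*(M 1 0) + 3*(M' 0 1)^2*(M 0 1)*(M 1 0)^2 + (M' 0 1)^2*(M 0 1)^2 - 3*(M' 0 1)^2*(M 0 1)^2*(M 1 0) + (M' 0 1)^2*(M 0 1)^3 + (M' 0 1)^2*(M 1 0)^2 - (M' 0 1)^2*(M 1 0)^3 + (M 0 1)*(M 1 0)^3 - (M 0 1)*(M 1 0)^4 - 2*(M 0 1)^2*(M 1 0)^2 + 3*(M 0 1)^2*(M 1 0)^3 + (M 0 1)^3*(M 1 0) - 3*(M 0 1)^3*(M 1 0)^2 + (M 0 1)^4*(M 1 0))) * h2 + (-(M 0 1 * M 1 0) - M 0 1 * M 1 0 ^ 2 * M' 0 1 ^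 2 * 3 + M 0 1 * M 1 0 ^ 3 * M' 0 1 * 2 + M 0 1 * M 1 0 ^ 4 + M 0 1 * M' 0 1 + M 0 1 ^ 2 * M 1 0 * M' 0 1 ^ 2 * 3 - M 0 1 ^ 2 * M 1 0 ^ 3 * 3 - M 0 1 ^ 3 * M 1 0 * M' 0 1 * 2 + M 0 1 ^ 3 * M 1 0 ^ 2 * 3 - M 0 1 ^ 3 * M' 0 1 ^ 2 - M 0 1 ^ 4 * M 1 0 + M 0 1 ^ 4 * M' 0 1 + M 1 0 * M' 0 1 + M 1 0 ^ 3 * M' 0 1 ^ 2 - M 1 0 ^ 4 * M' 0 1 - M' 0 1 ^ 2) * h2
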